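/- Assume the strong dissipativity condition (H7): there exists γ₂ > 0 such that 2⟨y₁ − y₂, g(x,y₁) − g(x,y₂)⟩ + |h(x,y₁) − h(x,y₂)|² ≤ −γ₂|y₁ − y₂|² for all x, y₁, y₂, together with (H6)₂. Then solutions of the frozen SDE from different initial conditions contract exponentially in L²: E[|Y^{x,y₁}_t − Y^{x,y₂}_t|²] ≤ e^{−γ₂ t}|y₁ − y₂|² for all t ≥ 0, x ∈ ℝ^m, y₁, y₂ ∈ ℝⁿ. -/

import Mathlib

open MeasureTheory Filter

/-- A process is a local martingale if there is a localizing sequence of stopping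
times tending to infinity such that each stopped process is a martingale. -/
def IsLocalMartingale {Ω : Type*} {m : MeasurableSpace Ω}
    (F : Filtration ℝ m) (ℙ : Measure Ω) (M : ℝ → Ω → ℝ) : Prop :=
  ∃ τ : ℕ → Ω → ℝ, (∀ k, IsStoppingTime F (fun ω => (τ k ω : WithTop ℝ)))
    ∧ (∀ ω, Tendsto (fun k => τ k ω) atTop atTop)
    ∧ ∀ k, Martingale (stoppedProcess M (fun ω => (τ k ω : WithTop ℝ))) F ℙ

/-- The generator of the pair `(Y^{x,y₁}, Y^{x,y₂})` of two solutions of the frozen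
SDE `dY = g(x,Y)dt + h(x,Y)dw` driven by the *same* Brownian motion `w`:
`L φ(u,v) = Dφ(u,v)[(g(x,u), g(x,v))]
  + ½ Σ_k D²φ(u,v)[(h_k(x,u), h_k(x,v)), (h_k(x,u), h_k(x,v))]`,
where `h_k` denotes the `k`-th column of `h`. -/
noncomputable def frozenPairGenerator (m n e : ℕ)
    (g : (Fin m → ℝ) → (Fin n → ℝ) → (Fin n → ℝ))
    (h : (Fin m → ℝ) → (Fin n → ℝ) → (Fin n → Fin e → ℝ))
    (x : Fin m → ℝ) (φ : ((Fin n → ℝ) × (Fin n → ℝ)) → ℝ)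
    (p : (Fin n → ℝ) × (Fin n → ℝ)) : ℝ :=
  fderiv ℝ φ p (g x p.1, g x p.2)
    + (1/2) * ∑ k : Fin e,
        fderiv ℝ (fun z => fderiv ℝ φ z ((fun i => h x p.1 i k), (fun i => h x p.2 i k)))
          p ((fun i => h x p.1 i k), (fun i => h x p.2 i k))

namespace FrozenAux

noncomputable def coordD (n : ℕ) (i : Fin n) :
    ((Fin n → ℝ) × (Fin n → ℝ)) →L[ℝ] ℝ :=
  (ContinuousLinearMap.proj i).comp
    (ContinuousLinearMap.fst ℝ (Fin n → ℝ) (Fin n → ℝ)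
      - ContinuousLinearMap.snd ℝ (Fin n → ℝ) (Fin n → ℝ))

@[simp] lemma coordD_apply (n : ℕ) (i : Fin n) (z : (Fin n → ℝ) × (Fin n → ℝ)) :
    coordD n i z = z.1 i - z.2 i := by
  simp [coordD]

def phiSq (n : ℕ) : ((Fin n → ℝ) × (Fin n → ℝ)) → ℝ := fun p => ∑ i, (p.1 i - p.2 i) ^ 2

lemma contDiff_phiSq (n : ℕ) : ContDiff ℝ 2 (phiSq n) := by
  apply ContDiff.sum
  intro i _
  have : ContDiff ℝ 2 fun p : (Fin n → ℝ) × (Fin n → ℝ) => coordD n i p :=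
    (coordD n i).contDiff
  simpa using this.pow 2

lemma hasFDerivAt_phiSq (n : ℕ) (p : (Fin n → ℝ) × (Fin n → ℝ)) :
    HasFDerivAt (phiSq n) (∑ i, (2 * (p.1 i - p.2 i)) • coordD n i) p := by
  have h : ∀ i : Fin n, HasFDerivAt (fun z : (Fin n → ℝ) × (Fin n → ℝ) => (z.1 i - z.2 i) ^ 2)
      ((2 * (p.1 i - p.2 i)) • coordD n i) p := by
    intro i
    have h1 : HasFDerivAt (fun z : (Fin n → ℝ) × (Fin n → ℝ) => coordD n i z) (coordD n i) p :=
      (coordD n i).hasFDerivAt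
    have := h1.mul h1
    have h2 : HasFDerivAt (fun z : (Fin n → ℝ) × (Fin n → ℝ) => coordD n i z * coordD n i z)
        ((2 * (p.1 i - p.2 i)) • coordD n i) p := by
      rw [show (2 * (p.1 i - p.2 i)) • coordD n i
          = coordD n i p • coordD n i + coordD n i p • coordD n i by simp [two_mul, add_smul]]
      exact this
    simpa [pow_two] using h2
  have := HasFDerivAt.fun_sum (fun i (_ : i ∈ Finset.univ) => h i)
  exact this

lemma fderiv_phiSq_apply (n : ℕ) (p w : (Fin n → ℝ) × (Fin n → ℝ)) :
    fderiv ℝ (phiSq n) p w = ∑ i, 2 * (p.1 i - p.2 i) * (w.1 i - w.2 i) := by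
  rw [(hasFDerivAt_phiSq n p).fderiv]
  simp [mul_assoc]

lemma fderiv2_phiSq_apply (n : ℕ) (p w : (Fin n → ℝ) × (Fin n → ℝ)) :
    fderiv ℝ (fun z => fderiv ℝ (phiSq n) z w) p w = ∑ i, 2 * (w.1 i - w.2 i) ^ 2 := by
  have hfun : (fun z => fderiv ℝ (phiSq n) z w)
      = fun z => (∑ i, (2 * (w.1 i - w.2 i)) • coordD n i) z := by
    funext z
    rw [fderiv_phiSq_apply]
    simp [mul_assoc, mul_comm, mul_left_comm]
  rw [hfun, ContinuousLinearMap.fderiv]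
  simp [pow_two, mul_assoc]

lemma phiSq_nonneg (n : ℕ) (p : (Fin n → ℝ) × (Fin n → ℝ)) : 0 ≤ phiSq n p :=
  Finset.sum_nonneg fun i _ => sq_nonneg _

lemma generator_phiSq (m n e : ℕ)
    (g : (Fin m → ℝ) → (Fin n → ℝ) → (Fin n → ℝ))
    (h : (Fin m → ℝ) → (Fin n → ℝ) → (Fin n → Fin e → ℝ))
    (x : Fin m → ℝ) (p : (Fin n → ℝ) × (Fin n → ℝ)) :
    frozenPairGenerator m n e g h x (phiSq n) p
      = 2 * (∑ i, (p.1 i - p.2 i) * (g x p.1 i - g x p.2 i))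
        + ∑ i, ∑ k, (h x p.1 i k - h x p.2 i k) ^ 2 := by
  unfold frozenPairGenerator
  rw [fderiv_phiSq_apply]
  have h2 : ∀ k : Fin e,
      fderiv ℝ (fun z => fderiv ℝ (phiSq n) z ((fun i => h x p.1 i k), (fun i => h x p.2 i k)))
          p ((fun i => h x p.1 i k), (fun i => h x p.2 i k))
        = ∑ i, 2 * (h x p.1 i k - h x p.2 i k) ^ 2 := fun k =>
    fderiv2_phiSq_apply n p ((fun i => h x p.1 i k), (fun i => h x p.2 i k))
  simp only [h2]
  congr 1
  · rw [Finset.mul_sum]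
    exact Finset.sum_congr rfl fun i _ => by ring
  · conv_lhs => rw [Finset.sum_comm]
    rw [Finset.mul_sum]
    refine Finset.sum_congr rfl fun i _ => ?_
    rw [Finset.mul_sum]
    exact Finset.sum_congr rfl fun k _ => by ring

/-- Parametrized primitive of a function of the pair process. -/
noncomputable def prim {Ω : Type*} (n : ℕ) (P : ℝ → Ω → (Fin n → ℝ) × (Fin n → ℝ))
    (f : ((Fin n → ℝ) × (Fin n → ℝ)) → ℝ) (c : ℝ) : ℝ → Ω → ℝ :=
  fun r ω => ∫ v in c..r, f (P v ω)

lemma sm_comp_theta {Ω : Type*} [MeasurableSpace Ω] (G : ℝ → Ω → ℝ)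
    (hGJ : StronglyMeasurable (Function.uncurry G)) (θ : Ω → ℝ) (hθ : Measurable θ) :
    StronglyMeasurable fun ω => G (θ ω) ω :=
  hGJ.comp_measurable (hθ.prodMk measurable_id)

set_option maxHeartbeats 1000000 in
theorem main_aux {Ω : Type*} {mΩ : MeasurableSpace Ω}
    (ℙ : Measure Ω) [IsProbabilityMeasure ℙ] (F : Filtration ℝ mΩ)
    (n : ℕ) (γ₂ : ℝ) (hγ₂ : 0 < γ₂)
    (P : ℝ → Ω → (Fin n → ℝ) × (Fin n → ℝ))
    (p₀ : (Fin n → ℝ) × (Fin n → ℝ))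
    (L : ((Fin n → ℝ) × (Fin n → ℝ)) → ℝ)
    (hLc : Continuous L)
    (hL : ∀ p, L p ≤ -γ₂ * phiSq n p)
    (hP0 : ∀ ω, P 0 ω = p₀)
    (hPcont : ∀ ω, Continuous fun r => P r ω)
    (hPmeas : ∀ r, StronglyMeasurable (P r))
    (hloc : IsLocalMartingale F ℙ (fun r ω =>
      phiSq n (P r ω) - phiSq n p₀ - ∫ v in (0:ℝ)..r, L (P v ω)))
    (t : ℝ) (ht : 0 ≤ t) :
    ∫ ω, phiSq n (P t ω) ∂ℙ ≤ Real.exp (-(γ₂ * t)) * phiSq n p₀ := by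
  have hφc : Continuous (phiSq n) := (contDiff_phiSq n).continuous
  have hφ0 : ∀ p, 0 ≤ phiSq n p := phiSq_nonneg n
  have hL0 : ∀ p, L p ≤ 0 := fun p => (hL p).trans
    (mul_nonpos_of_nonpos_of_nonneg (by linarith) (hφ0 p))
  -- basic measurability / continuity facts
  have hφPm : ∀ r, StronglyMeasurable fun ω => phiSq n (P r ω) :=
    fun r => hφc.comp_stronglyMeasurable (hPmeas r)
  have hφPcont : ∀ ω, Continuous fun r => phiSq n (P r ω) :=
    fun ω => hφc.comp (hPcont ω)
  have hLPm : ∀ r, StronglyMeasurable fun ω => L (P r ω) :=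
    fun r => hLc.comp_stronglyMeasurable (hPmeas r)
  have hLPcont : ∀ ω, Continuous fun r => L (P r ω) :=
    fun ω => hLc.comp (hPcont ω)
  have hΦJ : StronglyMeasurable (Function.uncurry fun r ω => phiSq n (P r ω)) :=
    stronglyMeasurable_uncurry_of_continuous_of_stronglyMeasurable hφPcont hφPm
  have hLJ : StronglyMeasurable (Function.uncurry fun r ω => L (P r ω)) :=
    stronglyMeasurable_uncurry_of_continuous_of_stronglyMeasurable hLPcont hLPm
  have hLP_ii : ∀ ω (a b : ℝ), IntervalIntegrable (fun v => L (P v ω)) volume a b :=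
    fun ω a b => (hLPcont ω).intervalIntegrable a b
  have hφP_ii : ∀ ω (a b : ℝ), IntervalIntegrable (fun v => phiSq n (P v ω)) volume a b :=
    fun ω a b => (hφPcont ω).intervalIntegrable a b
  -- measurability of parametrized primitives
  have hprim : ∀ (c : ℝ) (f : ((Fin n → ℝ) × (Fin n → ℝ)) → ℝ),
      StronglyMeasurable (Function.uncurry fun r ω => f (P r ω)) →
      (∀ ω, Continuous fun r => f (P r ω)) →
      StronglyMeasurable (Function.uncurry (prim n P f c)) := by
    intro c f hJ hcont
    unfold prim
    refine stronglyMeasurable_uncurry_of_continuous_of_stronglyMeasurable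
      (fun ω => intervalIntegral.continuous_primitive
        (fun a b => ((hcont ω).intervalIntegrable a b)) c) (fun r => ?_)
    have hswap : StronglyMeasurable fun q : Ω × ℝ => f (P q.2 q.1) :=
      hJ.comp_measurable measurable_swap
    have h1 : StronglyMeasurable fun ω => ∫ v in Set.Ioc c r, f (P v ω) ∂volume :=
      hswap.integral_prod_right'
        (ν := volume.restrict (Set.Ioc c r))
    have h2 : StronglyMeasurable fun ω => ∫ v in Set.Ioc r c, f (P v ω) ∂volume :=
      hswap.integral_prod_right'
        (ν := volume.restrict (Set.Ioc r c))
    have : (fun ω => ∫ v in c..r, f (P v ω)) =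
        fun ω => (∫ v in Set.Ioc c r, f (P v ω) ∂volume)
          - ∫ v in Set.Ioc r c, f (P v ω) ∂volume := by
      funext ω; rfl
    rw [this]
    exact h1.sub h2
  set Fl : ℝ → ENNReal := fun r => ∫⁻ ω, ENNReal.ofReal (phiSq n (P r ω)) ∂ℙ with hFl_def
  have key0 : ∀ s u : ℝ, 0 ≤ s → s ≤ u →
      Fl u + ENNReal.ofReal γ₂ * (∫⁻ v in Set.Ioc s u, Fl v ∂volume) ≤ Fl s := by
    intro s u hs hsu
    obtain ⟨τ, hτ, hτt, hτm⟩ := hloc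
    have hNmart : ∀ k, Martingale
        (stoppedProcess (fun r ω => phiSq n (P r ω) - phiSq n p₀ - prim n P L 0 r ω) (fun ω => (τ k ω : WithTop ℝ)))
        F ℙ := fun k => hτm k
    -- measurability
    have hτmeas : ∀ k, Measurable (τ k) := fun k =>
      measurable_of_Iic fun r => F.le r _ (by
        have := (hτ k).measurableSet_le r; simp only [WithTop.coe_le_coe] at this; exact this)
    have hθmeas : ∀ k, Measurable (fun ω => min u (τ k ω)) := fun k =>
      measurable_const.min (hτmeas k)
    have hGJ : StronglyMeasurable (Function.uncurry (prim n P L 0)) := hprim 0 L hLJ hLPcont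
    have hHsJ : StronglyMeasurable (Function.uncurry (prim n P (phiSq n) s)) :=
      hprim s (phiSq n) hΦJ hφPcont
    have hq : ∀ k, Measurable fun ω => (min u (τ k ω), ω) := fun k =>
      (hθmeas k).prodMk measurable_id
    have hA1m : ∀ k, StronglyMeasurable fun ω => phiSq n (P (min u (τ k ω)) ω) := fun k =>
      sm_comp_theta _ hΦJ _ (hθmeas k)
    have hGθm : ∀ k, StronglyMeasurable fun ω => prim n P L 0 (min u (τ k ω)) ω := fun k =>
      sm_comp_theta _ hGJ _ (hθmeas k)
    have hJm : ∀ k, StronglyMeasurable fun ω => prim n P (phiSq n) s (min u (τ k ω)) ω :=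
      fun k => sm_comp_theta _ hHsJ _ (hθmeas k)
    have hGr : ∀ r, StronglyMeasurable (prim n P L 0 r) := fun r =>
      sm_comp_theta _ hGJ _ measurable_const
    have hHsr : ∀ r, StronglyMeasurable (prim n P (phiSq n) s r) := fun r =>
      sm_comp_theta _ hHsJ _ measurable_const
    have hBmF : ∀ k, MeasurableSet[F s] {ω | s ≤ τ k ω} := fun k => by
        simpa using (hτ k).measurableSet_ge s
    have hBm : ∀ k, MeasurableSet {ω | s ≤ τ k ω} := fun k => F.le s _ (hBmF k)
    -- pointwise sign facts
    have hGnp : ∀ (r : ℝ) (ω : Ω), 0 ≤ r → prim n P L 0 r ω ≤ 0 := by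
      intro r ω hr
      have h1 : (∫ v in (0:ℝ)..r, L (P v ω)) ≤ ∫ v in (0:ℝ)..r, (0:ℝ) :=
        intervalIntegral.integral_mono_on hr (hLP_ii ω 0 r) intervalIntegrable_const
          (fun v _ => hL0 _)
      simpa [prim] using h1
    have hJnn : ∀ (r : ℝ) (ω : Ω), s ≤ r → 0 ≤ prim n P (phiSq n) s r ω := fun r ω hr =>
      intervalIntegral.integral_nonneg hr fun v _ => hφ0 _
    -- the key estimate for each localizing time
    have hstep : ∀ k, (∫⁻ ω, ({ω | s ≤ τ k ω}).indicator
        (fun ω => ENNReal.ofReal (phiSq n (P (min u (τ k ω)) ω)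
          + γ₂ * prim n P (phiSq n) s (min u (τ k ω)) ω)) ω ∂ℙ)
        ≤ Fl s := by
      intro k
      have hsθ : ∀ ω ∈ {ω | s ≤ τ k ω}, s ≤ min u (τ k ω) := fun ω hω => le_min hsu hω
      have h0θ : ∀ ω ∈ {ω | s ≤ τ k ω}, 0 ≤ min u (τ k ω) := fun ω hω => hs.trans (hsθ ω hω)
      have hNu_eq : ∀ ω, stoppedProcess
            (fun r ω => phiSq n (P r ω) - phiSq n p₀ - prim n P L 0 r ω) (fun ω => (τ k ω : WithTop ℝ)) u ω
          = phiSq n (P (min u (τ k ω)) ω) - phiSq n p₀ - prim n P L 0 (min u (τ k ω)) ω :=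
        fun ω => by
          rw [stoppedProcess, ← WithTop.coe_min, WithTop.untopA_eq_untop WithTop.coe_ne_top,
            WithTop.untop_coe]
      have hNs_eq : ∀ ω ∈ {ω | s ≤ τ k ω}, stoppedProcess
            (fun r ω => phiSq n (P r ω) - phiSq n p₀ - prim n P L 0 r ω) (fun ω => (τ k ω : WithTop ℝ)) s ω
          = phiSq n (P s ω) - phiSq n p₀ - prim n P L 0 s ω := by
        intro ω hω
        rw [stoppedProcess, ← WithTop.coe_min, WithTop.untopA_eq_untop WithTop.coe_ne_top,
          WithTop.untop_coe]
        rw [min_eq_left hω]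
      have hNu_int : Integrable (stoppedProcess
          (fun r ω => phiSq n (P r ω) - phiSq n p₀ - prim n P L 0 r ω) (fun ω => (τ k ω : WithTop ℝ)) u) ℙ :=
        (hNmart k).integrable u
      have hNs_int : Integrable (stoppedProcess
          (fun r ω => phiSq n (P r ω) - phiSq n p₀ - prim n P L 0 r ω) (fun ω => (τ k ω : WithTop ℝ)) s) ℙ :=
        (hNmart k).integrable s
      -- integrability over B k
      have hbu : Integrable (fun ω => stoppedProcess
            (fun r ω => phiSq n (P r ω) - phiSq n p₀ - prim n P L 0 r ω) (fun ω => (τ k ω : WithTop ℝ)) u ω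
            + phiSq n p₀) (ℙ.restrict {ω | s ≤ τ k ω}) :=
        hNu_int.integrableOn.add (integrable_const _)
      have hbs : Integrable (fun ω => stoppedProcess
            (fun r ω => phiSq n (P r ω) - phiSq n p₀ - prim n P L 0 r ω) (fun ω => (τ k ω : WithTop ℝ)) s ω
            + phiSq n p₀) (ℙ.restrict {ω | s ≤ τ k ω}) :=
        hNs_int.integrableOn.add (integrable_const _)
      have hA1_int : IntegrableOn (fun ω => phiSq n (P (min u (τ k ω)) ω))
          {ω | s ≤ τ k ω} ℙ := by
        refine Integrable.mono' hbu (hA1m k).aestronglyMeasurable ?_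
        refine (ae_restrict_iff' (hBm k)).2 (ae_of_all _ fun ω hω => ?_)
        rw [Real.norm_of_nonneg (hφ0 _)]
        have h1 := hNu_eq ω
        have h2 := hGnp (min u (τ k ω)) ω (h0θ ω hω)
        linarith
      have hGθ_int : IntegrableOn (fun ω => prim n P L 0 (min u (τ k ω)) ω)
          {ω | s ≤ τ k ω} ℙ := by
        refine Integrable.mono' hbu (hGθm k).aestronglyMeasurable ?_
        refine (ae_restrict_iff' (hBm k)).2 (ae_of_all _ fun ω hω => ?_)
        have h1 := hNu_eq ω
        have h2 := hGnp (min u (τ k ω)) ω (h0θ ω hω)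
        have h3 := hφ0 (P (min u (τ k ω)) ω)
        rw [Real.norm_of_nonpos h2]
        linarith
      have hφPs_int : IntegrableOn (fun ω => phiSq n (P s ω)) {ω | s ≤ τ k ω} ℙ := by
        refine Integrable.mono' hbs (hφPm s).aestronglyMeasurable ?_
        refine (ae_restrict_iff' (hBm k)).2 (ae_of_all _ fun ω hω => ?_)
        rw [Real.norm_of_nonneg (hφ0 _)]
        have h1 := hNs_eq ω hω
        have h2 := hGnp s ω hs
        linarith
      have hGs_int : IntegrableOn (prim n P L 0 s) {ω | s ≤ τ k ω} ℙ := by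
        refine Integrable.mono' hbs (hGr s).aestronglyMeasurable ?_
        refine (ae_restrict_iff' (hBm k)).2 (ae_of_all _ fun ω hω => ?_)
        have h1 := hNs_eq ω hω
        have h2 := hGnp s ω hs
        have h3 := hφ0 (P s ω)
        rw [Real.norm_of_nonpos h2]
        linarith
      -- the martingale set-integral identity
      have hSI : (∫ ω in {ω | s ≤ τ k ω}, stoppedProcess
            (fun r ω => phiSq n (P r ω) - phiSq n p₀ - prim n P L 0 r ω) (fun ω => (τ k ω : WithTop ℝ)) s ω ∂ℙ)
          = ∫ ω in {ω | s ≤ τ k ω}, stoppedProcess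
            (fun r ω => phiSq n (P r ω) - phiSq n p₀ - prim n P L 0 r ω) (fun ω => (τ k ω : WithTop ℝ)) u ω ∂ℙ :=
        (hNmart k).setIntegral_eq hsu (hBmF k)
      have hNs_congr : (∫ ω in {ω | s ≤ τ k ω}, stoppedProcess
            (fun r ω => phiSq n (P r ω) - phiSq n p₀ - prim n P L 0 r ω) (fun ω => (τ k ω : WithTop ℝ)) s ω ∂ℙ)
          = ∫ ω in {ω | s ≤ τ k ω}, (phiSq n (P s ω) - phiSq n p₀ - prim n P L 0 s ω) ∂ℙ :=
        setIntegral_congr_fun (hBm k) fun ω hω => hNs_eq ω hω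
      have hNu_congr : (∫ ω in {ω | s ≤ τ k ω}, stoppedProcess
            (fun r ω => phiSq n (P r ω) - phiSq n p₀ - prim n P L 0 r ω) (fun ω => (τ k ω : WithTop ℝ)) u ω ∂ℙ)
          = ∫ ω in {ω | s ≤ τ k ω}, (phiSq n (P (min u (τ k ω)) ω) - phiSq n p₀
              - prim n P L 0 (min u (τ k ω)) ω) ∂ℙ :=
        setIntegral_congr_fun (hBm k) fun ω _ => hNu_eq ω
      have hsplit_s : (∫ ω in {ω | s ≤ τ k ω},
            (phiSq n (P s ω) - phiSq n p₀ - prim n P L 0 s ω) ∂ℙ)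
          = (∫ ω in {ω | s ≤ τ k ω}, phiSq n (P s ω) ∂ℙ)
            - (∫ _ω in {ω | s ≤ τ k ω}, phiSq n p₀ ∂ℙ)
            - ∫ ω in {ω | s ≤ τ k ω}, prim n P L 0 s ω ∂ℙ := by
        have h1 : Integrable (fun ω => phiSq n (P s ω) - phiSq n p₀)
            (ℙ.restrict {ω | s ≤ τ k ω}) := hφPs_int.sub (integrable_const _)
        rw [integral_sub h1 hGs_int, integral_sub hφPs_int (integrable_const _)]
      have hsplit_u : (∫ ω in {ω | s ≤ τ k ω}, (phiSq n (P (min u (τ k ω)) ω) - phiSq n p₀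
            - prim n P L 0 (min u (τ k ω)) ω) ∂ℙ)
          = (∫ ω in {ω | s ≤ τ k ω}, phiSq n (P (min u (τ k ω)) ω) ∂ℙ)
            - (∫ _ω in {ω | s ≤ τ k ω}, phiSq n p₀ ∂ℙ)
            - ∫ ω in {ω | s ≤ τ k ω}, prim n P L 0 (min u (τ k ω)) ω ∂ℙ := by
        have h1 : Integrable (fun ω => phiSq n (P (min u (τ k ω)) ω) - phiSq n p₀)
            (ℙ.restrict {ω | s ≤ τ k ω}) := hA1_int.sub (integrable_const _)
        rw [integral_sub h1 hGθ_int, integral_sub hA1_int (integrable_const _)]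
      -- the drift estimate
      have hI_le : ∀ ω ∈ {ω | s ≤ τ k ω}, prim n P L 0 (min u (τ k ω)) ω - prim n P L 0 s ω
          ≤ -γ₂ * prim n P (phiSq n) s (min u (τ k ω)) ω := by
        intro ω hω
        have hdiff : prim n P L 0 (min u (τ k ω)) ω - prim n P L 0 s ω
            = ∫ v in s..(min u (τ k ω)), L (P v ω) :=
          intervalIntegral.integral_interval_sub_left (hLP_ii ω 0 (min u (τ k ω)))
            (hLP_ii ω 0 s)
        rw [hdiff]
        calc (∫ v in s..(min u (τ k ω)), L (P v ω))
            ≤ ∫ v in s..(min u (τ k ω)), -γ₂ * phiSq n (P v ω) := by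
              refine intervalIntegral.integral_mono_on (hsθ ω hω) (hLP_ii ω s _) ?_
                (fun v _ => hL _)
              exact (continuous_const.mul (hφPcont ω)).intervalIntegrable _ _
          _ = -γ₂ * prim n P (phiSq n) s (min u (τ k ω)) ω :=
              intervalIntegral.integral_const_mul _ _
      have hJ_int : IntegrableOn (fun ω => prim n P (phiSq n) s (min u (τ k ω)) ω)
          {ω | s ≤ τ k ω} ℙ := by
        have hg : Integrable (fun ω => γ₂⁻¹ * (prim n P L 0 s ω
            - prim n P L 0 (min u (τ k ω)) ω)) (ℙ.restrict {ω | s ≤ τ k ω}) :=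
          (hGs_int.sub hGθ_int).const_mul γ₂⁻¹
        refine Integrable.mono' hg (hJm k).aestronglyMeasurable ?_
        refine (ae_restrict_iff' (hBm k)).2 (ae_of_all _ fun ω hω => ?_)
        rw [Real.norm_of_nonneg (hJnn _ ω (hsθ ω hω))]
        have h1 := hI_le ω hω
        rw [inv_mul_eq_div, le_div_iff₀ hγ₂]
        nlinarith
      have hIint_le : (∫ ω in {ω | s ≤ τ k ω},
            (prim n P L 0 (min u (τ k ω)) ω - prim n P L 0 s ω) ∂ℙ)
          ≤ ∫ ω in {ω | s ≤ τ k ω}, -γ₂ * prim n P (phiSq n) s (min u (τ k ω)) ω ∂ℙ :=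
        setIntegral_mono_on (hGθ_int.sub hGs_int) (hJ_int.const_mul (-γ₂)) (hBm k) hI_le
      have hIsub : (∫ ω in {ω | s ≤ τ k ω},
            (prim n P L 0 (min u (τ k ω)) ω - prim n P L 0 s ω) ∂ℙ)
          = (∫ ω in {ω | s ≤ τ k ω}, prim n P L 0 (min u (τ k ω)) ω ∂ℙ)
            - ∫ ω in {ω | s ≤ τ k ω}, prim n P L 0 s ω ∂ℙ :=
        integral_sub hGθ_int hGs_int
      have hmulJ : (∫ ω in {ω | s ≤ τ k ω},
            -γ₂ * prim n P (phiSq n) s (min u (τ k ω)) ω ∂ℙ)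
          = -γ₂ * ∫ ω in {ω | s ≤ τ k ω}, prim n P (phiSq n) s (min u (τ k ω)) ω ∂ℙ :=
        integral_const_mul _ _
      have hkey_real : (∫ ω in {ω | s ≤ τ k ω}, (phiSq n (P (min u (τ k ω)) ω)
            + γ₂ * prim n P (phiSq n) s (min u (τ k ω)) ω) ∂ℙ)
          ≤ ∫ ω in {ω | s ≤ τ k ω}, phiSq n (P s ω) ∂ℙ := by
        rw [integral_add hA1_int (hJ_int.const_mul γ₂), integral_const_mul]
        have h0 := hSI
        rw [hNs_congr, hsplit_s] at h0
        rw [hNu_congr, hsplit_u] at h0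
        rw [hIsub, hmulJ] at hIint_le
        linarith
      -- pass to the Lebesgue integral
      have hsum_int : IntegrableOn
          (fun ω => phiSq n (P (min u (τ k ω)) ω)
            + γ₂ * prim n P (phiSq n) s (min u (τ k ω)) ω) {ω | s ≤ τ k ω} ℙ :=
        hA1_int.add (hJ_int.const_mul γ₂)
      have hsum_nn : 0 ≤ᵐ[ℙ.restrict {ω | s ≤ τ k ω}]
          fun ω => phiSq n (P (min u (τ k ω)) ω)
            + γ₂ * prim n P (phiSq n) s (min u (τ k ω)) ω := by
        refine (ae_restrict_iff' (hBm k)).2 (ae_of_all _ fun ω hω => ?_)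
        simp only [Pi.zero_apply]
        have h1 := hJnn (min u (τ k ω)) ω (hsθ ω hω)
        have h2 := hφ0 (P (min u (τ k ω)) ω)
        have := mul_nonneg hγ₂.le h1
        linarith
      calc (∫⁻ ω, ({ω | s ≤ τ k ω}).indicator
            (fun ω => ENNReal.ofReal (phiSq n (P (min u (τ k ω)) ω)
              + γ₂ * prim n P (phiSq n) s (min u (τ k ω)) ω)) ω ∂ℙ)
          = ∫⁻ ω in {ω | s ≤ τ k ω}, ENNReal.ofReal (phiSq n (P (min u (τ k ω)) ω)
              + γ₂ * prim n P (phiSq n) s (min u (τ k ω)) ω) ∂ℙ :=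
            lintegral_indicator (hBm k) _
        _ = ENNReal.ofReal (∫ ω in {ω | s ≤ τ k ω}, (phiSq n (P (min u (τ k ω)) ω)
              + γ₂ * prim n P (phiSq n) s (min u (τ k ω)) ω) ∂ℙ) :=
            (ofReal_integral_eq_lintegral_ofReal hsum_int hsum_nn).symm
        _ ≤ ENNReal.ofReal (∫ ω in {ω | s ≤ τ k ω}, phiSq n (P s ω) ∂ℙ) :=
            ENNReal.ofReal_le_ofReal hkey_real
        _ = ∫⁻ ω in {ω | s ≤ τ k ω}, ENNReal.ofReal (phiSq n (P s ω)) ∂ℙ :=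
            ofReal_integral_eq_lintegral_ofReal hφPs_int
              ((ae_restrict_iff' (hBm k)).2 (ae_of_all _ fun ω _ => hφ0 _))
        _ ≤ Fl s := setLIntegral_le_lintegral _ _
    -- Fatou
    have hcmeas : ∀ k, Measurable fun ω => ({ω | s ≤ τ k ω}).indicator
        (fun ω => ENNReal.ofReal (phiSq n (P (min u (τ k ω)) ω)
          + γ₂ * prim n P (phiSq n) s (min u (τ k ω)) ω)) ω := by
      intro k
      refine Measurable.indicator ?_ (hBm k)
      exact ((hA1m k).add ((hJm k).const_mul γ₂)).measurable.ennreal_ofReal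
    have hliminf : ∀ ω, Filter.liminf (fun k => ({ω | s ≤ τ k ω}).indicator
        (fun ω => ENNReal.ofReal (phiSq n (P (min u (τ k ω)) ω)
          + γ₂ * prim n P (phiSq n) s (min u (τ k ω)) ω)) ω) atTop
        = ENNReal.ofReal (phiSq n (P u ω) + γ₂ * prim n P (phiSq n) s u ω) := by
      intro ω
      have hev : ∀ᶠ k in atTop, ({ω | s ≤ τ k ω}).indicator
          (fun ω => ENNReal.ofReal (phiSq n (P (min u (τ k ω)) ω)
            + γ₂ * prim n P (phiSq n) s (min u (τ k ω)) ω)) ω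
          = ENNReal.ofReal (phiSq n (P u ω) + γ₂ * prim n P (phiSq n) s u ω) := by
        filter_upwards [(hτt ω).eventually_ge_atTop (max s u)] with k hk
        have hωB : ω ∈ {ω | s ≤ τ k ω} := le_trans (le_max_left s u) hk
        have hθu : min u (τ k ω) = u := min_eq_left (le_trans (le_max_right s u) hk)
        rw [Set.indicator_of_mem hωB, hθu]
      rw [Filter.liminf_congr hev]
      exact Filter.liminf_const _
    -- identify the limit integrand with the target quantity
    have htarget : Fl u + ENNReal.ofReal γ₂ * (∫⁻ v in Set.Ioc s u, Fl v ∂volume)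
        = ∫⁻ ω, ENNReal.ofReal (phiSq n (P u ω) + γ₂ * prim n P (phiSq n) s u ω) ∂ℙ := by
      have hHsJ : StronglyMeasurable (Function.uncurry (prim n P (phiSq n) s)) :=
        hprim s (phiSq n) hΦJ hφPcont
      have hHsr : ∀ r, StronglyMeasurable (prim n P (phiSq n) s r) := fun r =>
        sm_comp_theta _ hHsJ _ measurable_const
      have hJnn : ∀ ω, 0 ≤ prim n P (phiSq n) s u ω := fun ω =>
        intervalIntegral.integral_nonneg hsu fun v _ => hφ0 _
      have h1 : ∀ ω, ENNReal.ofReal (phiSq n (P u ω) + γ₂ * prim n P (phiSq n) s u ω)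
          = ENNReal.ofReal (phiSq n (P u ω))
            + ENNReal.ofReal γ₂ * ENNReal.ofReal (prim n P (phiSq n) s u ω) := by
        intro ω
        rw [ENNReal.ofReal_add (hφ0 _) (mul_nonneg hγ₂.le (hJnn ω)),
          ENNReal.ofReal_mul hγ₂.le]
      simp only [h1]
      rw [lintegral_add_left ((hφPm u).measurable.ennreal_ofReal)]
      rw [lintegral_const_mul _ ((hHsr u).measurable.ennreal_ofReal)]
      congr 1
      congr 1
      have h2 : ∀ ω, ENNReal.ofReal (prim n P (phiSq n) s u ω)
          = ∫⁻ v in Set.Ioc s u, ENNReal.ofReal (phiSq n (P v ω)) ∂volume := by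
        intro ω
        unfold prim
        rw [intervalIntegral.integral_of_le hsu]
        exact ofReal_integral_eq_lintegral_ofReal
          ((hφPcont ω).integrableOn_Ioc) (ae_of_all _ fun v => hφ0 _)
      rw [show (fun ω => ENNReal.ofReal (prim n P (phiSq n) s u ω))
          = fun ω => ∫⁻ v in Set.Ioc s u, ENNReal.ofReal (phiSq n (P v ω)) ∂volume from
          funext h2]
      exact (lintegral_lintegral_swap
        (((hΦJ.measurable.comp measurable_swap).ennreal_ofReal).aemeasurable)).symm
    rw [htarget]
    calc (∫⁻ ω, ENNReal.ofReal (phiSq n (P u ω) + γ₂ * prim n P (phiSq n) s u ω) ∂ℙ)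
        = ∫⁻ ω, Filter.liminf (fun k => ({ω | s ≤ τ k ω}).indicator
            (fun ω => ENNReal.ofReal (phiSq n (P (min u (τ k ω)) ω)
              + γ₂ * prim n P (phiSq n) s (min u (τ k ω)) ω)) ω) atTop ∂ℙ := by
          congr 1; funext ω; rw [hliminf ω]
      _ ≤ Filter.liminf (fun k => ∫⁻ ω, ({ω | s ≤ τ k ω}).indicator
            (fun ω => ENNReal.ofReal (phiSq n (P (min u (τ k ω)) ω)
              + γ₂ * prim n P (phiSq n) s (min u (τ k ω)) ω)) ω ∂ℙ) atTop :=
          lintegral_liminf_le hcmeas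
      _ ≤ Fl s := by
          refine le_trans (Filter.liminf_le_liminf (Filter.Eventually.of_forall hstep)) ?_
          simp [Filter.liminf_const]
  have hmono : ∀ s u : ℝ, 0 ≤ s → s ≤ u → Fl u ≤ Fl s :=
    fun s u hs hsu => le_trans le_self_add (key0 s u hs hsu)
  have key : ∀ s u : ℝ, 0 ≤ s → s ≤ u →
      Fl u * (1 + ENNReal.ofReal γ₂ * ENNReal.ofReal (u - s)) ≤ Fl s := by
    intro s u hs hsu
    have h1 : Fl u * ENNReal.ofReal (u - s) ≤ ∫⁻ v in Set.Ioc s u, Fl v ∂volume := by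
      have : ∫⁻ v in Set.Ioc s u, Fl u ∂volume = Fl u * ENNReal.ofReal (u - s) := by
        rw [setLIntegral_const, Real.volume_Ioc]
      rw [← this]
      refine setLIntegral_mono' measurableSet_Ioc fun v hv => ?_
      exact hmono v u (le_of_lt (lt_of_le_of_lt hs hv.1)) hv.2
    calc Fl u * (1 + ENNReal.ofReal γ₂ * ENNReal.ofReal (u - s))
        = Fl u + ENNReal.ofReal γ₂ * (Fl u * ENNReal.ofReal (u - s)) := by ring
      _ ≤ Fl u + ENNReal.ofReal γ₂ * (∫⁻ v in Set.Ioc s u, Fl v ∂volume) := by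
          exact add_le_add_right (mul_le_mul_right h1 _) _
      _ ≤ Fl s := key0 s u hs hsu
  have hFl0 : Fl 0 = ENNReal.ofReal (phiSq n p₀) := by
    rw [hFl_def]
    simp only [hP0]
    rw [lintegral_const]
    simp
  -- iteration
  have iter : ∀ (d : ℝ), 0 ≤ d → ∀ j : ℕ,
      Fl (j * d) * (1 + ENNReal.ofReal γ₂ * ENNReal.ofReal d) ^ j ≤ Fl 0 := by
    intro d hd j
    induction j with
    | zero => simp
    | succ j ih =>
      have hstep : Fl ((j + 1 : ℕ) * d) * (1 + ENNReal.ofReal γ₂ * ENNReal.ofReal d)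
          ≤ Fl (j * d) := by
        have h := key ((j : ℝ) * d) (((j : ℕ) + 1 : ℕ) * d)
          (by positivity) (by push_cast; nlinarith)
        have harg : ((((j : ℕ) + 1 : ℕ) : ℝ) * d - (j : ℝ) * d) = d := by push_cast; ring
        rw [harg] at h
        exact_mod_cast h
      calc Fl ((j + 1 : ℕ) * d) * (1 + ENNReal.ofReal γ₂ * ENNReal.ofReal d) ^ (j + 1)
          = (Fl ((j + 1 : ℕ) * d) * (1 + ENNReal.ofReal γ₂ * ENNReal.ofReal d))
            * (1 + ENNReal.ofReal γ₂ * ENNReal.ofReal d) ^ j := by ring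
        _ ≤ Fl ((j : ℝ) * d) * (1 + ENNReal.ofReal γ₂ * ENNReal.ofReal d) ^ j :=
            mul_le_mul_left hstep _
        _ ≤ Fl 0 := ih
  have hFt_ne : Fl t ≠ ⊤ := by
    refine ne_top_of_le_ne_top ?_ (hmono 0 t le_rfl ht)
    rw [hFl0]; exact ENNReal.ofReal_ne_top
  -- real form of the iterated inequality
  have hreal : ∀ N : ℕ, 1 ≤ N →
      (Fl t).toReal * (1 + γ₂ * t / N) ^ N ≤ phiSq n p₀ := by
    intro N hN
    have hNpos : (0 : ℝ) < N := by exact_mod_cast hN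
    have hd : (0 : ℝ) ≤ t / N := div_nonneg ht hNpos.le
    have h := iter (t / N) hd N
    rw [show ((N : ℝ) * (t / N)) = t from mul_div_cancel₀ t (ne_of_gt hNpos)] at h
    have hbase : (0:ℝ) ≤ 1 + γ₂ * (t / N) := by positivity
    have hofg : (1 + ENNReal.ofReal γ₂ * ENNReal.ofReal (t / N))
        = ENNReal.ofReal (1 + γ₂ * (t / N)) := by
      rw [ENNReal.ofReal_add (by norm_num) (by positivity), ENNReal.ofReal_one,
        ENNReal.ofReal_mul hγ₂.le]
    rw [hofg, ← ENNReal.ofReal_pow hbase, hFl0] at h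
    have h2 := ENNReal.toReal_mono (by exact ENNReal.ofReal_ne_top) h
    rw [ENNReal.toReal_mul, ENNReal.toReal_ofReal (by positivity),
      ENNReal.toReal_ofReal (hφ0 p₀)] at h2
    calc (Fl t).toReal * (1 + γ₂ * t / N) ^ N
        = (Fl t).toReal * (1 + γ₂ * (t / N)) ^ N := by rw [mul_div_assoc]
      _ ≤ phiSq n p₀ := h2
  -- take the limit N → ∞
  have hexp : Tendsto (fun N : ℕ => (1 + γ₂ * t / N) ^ N) atTop
      (nhds (Real.exp (γ₂ * t))) := Real.tendsto_one_add_div_pow_exp (γ₂ * t)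
  have hlim : (Fl t).toReal * Real.exp (γ₂ * t) ≤ phiSq n p₀ := by
    refine le_of_tendsto (Tendsto.const_mul _ hexp) ?_
    filter_upwards [eventually_ge_atTop 1] with N hN using hreal N hN
  have hfinal : (Fl t).toReal ≤ Real.exp (-(γ₂ * t)) * phiSq n p₀ := by
    rw [Real.exp_neg]
    rw [inv_mul_eq_div, le_div_iff₀ (Real.exp_pos _)]
    linarith [hlim]
  have hint : ∫ ω, phiSq n (P t ω) ∂ℙ = (Fl t).toReal := by
    rw [hFl_def]
    exact integral_eq_lintegral_of_nonneg_ae (ae_of_all _ fun ω => hφ0 _)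
      (hφPm t).aestronglyMeasurable
  rw [hint]
  exact hfinal

end FrozenAux

/-- Exponential `L²`-contraction of the frozen SDE under the strong dissipativity
condition `(H7)`, together with `(H6)₂`: for two solutions from initial
conditions `y₁, y₂` driven by the same Brownian motion (encoded via the
martingale problem for the pair process),
`E[|Y^{x,y₁}_t − Y^{x,y₂}_t|²] ≤ e^{−γ₂ t}|y₁ − y₂|²` for all `t ≥ 0`. -/
theorem frozen_sde_contraction
    {Ω : Type*} {mΩ : MeasurableSpace Ω} (ℙ : Measure Ω) [IsProbabilityMeasure ℙ]
    (F : Filtration ℝ mΩ) (m n e : ℕ) (γ₁ γ₂ C η₃ : ℝ)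
    (hγ₁ : 0 < γ₁) (hγ₂ : 0 < γ₂) (hC : 0 < C) (hη₃ : 0 ≤ η₃)
    (g : (Fin m → ℝ) → (Fin n → ℝ) → (Fin n → ℝ))
    (h : (Fin m → ℝ) → (Fin n → ℝ) → (Fin n → Fin e → ℝ))
    (hg : LocallyLipschitz fun p : (Fin m → ℝ) × (Fin n → ℝ) => g p.1 p.2)
    (hh : ∃ K : NNReal, LipschitzWith K fun p : (Fin m → ℝ) × (Fin n → ℝ) => h p.1 p.2)
    -- the dissipativity condition `(H6)₂`
    (hdiss : ∀ (x : Fin m → ℝ) (y : Fin n → ℝ),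
      2 * (∑ i, y i * g x y i) + (∑ i, ∑ k, (h x y i k) ^ 2)
        ≤ -γ₁ * (∑ i, (y i) ^ 2) + C * ((∑ j, (x j) ^ 2) ^ (η₃ / 2) + 1))
    -- the strong dissipativity condition `(H7)`
    (hstrong : ∀ (x : Fin m → ℝ) (y₁ y₂ : Fin n → ℝ),
      2 * (∑ i, (y₁ i - y₂ i) * (g x y₁ i - g x y₂ i))
          + (∑ i, ∑ k, (h x y₁ i k - h x y₂ i k) ^ 2)
        ≤ -γ₂ * (∑ i, (y₁ i - y₂ i) ^ 2))
    -- solutions of the frozen SDE, driven by the same Brownian motion: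
    -- the pair process solves the associated (degenerate) martingale problem
    (Y : (Fin m → ℝ) → (Fin n → ℝ) → ℝ → Ω → (Fin n → ℝ))
    (hY0 : ∀ x y ω, Y x y 0 ω = y)
    (hYcont : ∀ x y ω, Continuous fun t => Y x y t ω)
    (hYadapted : ∀ x y, Adapted F (Y x y))
    (hpair : ∀ (x : Fin m → ℝ) (y₁ y₂ : Fin n → ℝ)
        (φ : ((Fin n → ℝ) × (Fin n → ℝ)) → ℝ), ContDiff ℝ 2 φ →
      IsLocalMartingale F ℙ (fun t ω =>
        φ (Y x y₁ t ω, Y x y₂ t ω) - φ (y₁, y₂)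
          - ∫ s in (0:ℝ)..t,
              frozenPairGenerator m n e g h x φ (Y x y₁ s ω, Y x y₂ s ω))) :
    ∀ (t : ℝ), 0 ≤ t → ∀ (x : Fin m → ℝ) (y₁ y₂ : Fin n → ℝ),
      (∫ ω, (∑ i, (Y x y₁ t ω i - Y x y₂ t ω i) ^ 2) ∂ℙ)
        ≤ Real.exp (-(γ₂ * t)) * (∑ i, (y₁ i - y₂ i) ^ 2) := by
  intro t ht x y₁ y₂
  have hgc : Continuous fun y : Fin n → ℝ => g x y :=
    hg.continuous.comp (continuous_const.prodMk continuous_id)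
  obtain ⟨K, hK⟩ := hh
  have hhc : Continuous fun y : Fin n → ℝ => h x y :=
    hK.continuous.comp (continuous_const.prodMk continuous_id)
  have hc1 : Continuous fun p : (Fin n → ℝ) × (Fin n → ℝ) => g x p.1 :=
    hgc.comp continuous_fst
  have hc2 : Continuous fun p : (Fin n → ℝ) × (Fin n → ℝ) => g x p.2 :=
    hgc.comp continuous_snd
  have hc1h : Continuous fun p : (Fin n → ℝ) × (Fin n → ℝ) => h x p.1 :=
    hhc.comp continuous_fst
  have hc2h : Continuous fun p : (Fin n → ℝ) × (Fin n → ℝ) => h x p.2 :=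
    hhc.comp continuous_snd
  have hLc : Continuous fun p : (Fin n → ℝ) × (Fin n → ℝ) =>
      2 * (∑ i, (p.1 i - p.2 i) * (g x p.1 i - g x p.2 i))
        + ∑ i, ∑ k, (h x p.1 i k - h x p.2 i k) ^ 2 := by
    refine Continuous.add (continuous_const.mul (continuous_finset_sum _ fun i _ => ?_))
      (continuous_finset_sum _ fun i _ => continuous_finset_sum _ fun k _ => ?_)
    · exact (((continuous_apply i).comp continuous_fst).sub
        ((continuous_apply i).comp continuous_snd)).mul
        (((continuous_apply i).comp hc1).sub ((continuous_apply i).comp hc2))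
    · exact ((((continuous_apply k).comp ((continuous_apply i).comp hc1h)).sub
        ((continuous_apply k).comp ((continuous_apply i).comp hc2h))).pow 2)
  have hL : ∀ p : (Fin n → ℝ) × (Fin n → ℝ),
      2 * (∑ i, (p.1 i - p.2 i) * (g x p.1 i - g x p.2 i))
        + (∑ i, ∑ k, (h x p.1 i k - h x p.2 i k) ^ 2)
      ≤ -γ₂ * FrozenAux.phiSq n p := fun p => hstrong x p.1 p.2
  have hP0 : ∀ ω, ((Y x y₁ 0 ω, Y x y₂ 0 ω) : (Fin n → ℝ) × (Fin n → ℝ)) = (y₁, y₂) := by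
    intro ω; rw [hY0, hY0]
  have hPcont : ∀ ω, Continuous fun r => ((Y x y₁ r ω, Y x y₂ r ω) :
      (Fin n → ℝ) × (Fin n → ℝ)) :=
    fun ω => (hYcont x y₁ ω).prodMk (hYcont x y₂ ω)
  have hPmeas : ∀ r, StronglyMeasurable fun ω => ((Y x y₁ r ω, Y x y₂ r ω) :
      (Fin n → ℝ) × (Fin n → ℝ)) :=
    fun r => (((hYadapted x y₁ r).mono (F.le r) le_rfl).prodMk
      ((hYadapted x y₂ r).mono (F.le r) le_rfl)).stronglyMeasurable
  have h0 := hpair x y₁ y₂ (FrozenAux.phiSq n) (FrozenAux.contDiff_phiSq n)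
  have hfun : (fun (r : ℝ) (ω : Ω) =>
        FrozenAux.phiSq n (Y x y₁ r ω, Y x y₂ r ω) - FrozenAux.phiSq n (y₁, y₂)
          - ∫ v in (0:ℝ)..r,
              frozenPairGenerator m n e g h x (FrozenAux.phiSq n) (Y x y₁ v ω, Y x y₂ v ω))
      = fun (r : ℝ) (ω : Ω) =>
        FrozenAux.phiSq n (Y x y₁ r ω, Y x y₂ r ω) - FrozenAux.phiSq n (y₁, y₂)
          - ∫ v in (0:ℝ)..r,
              (2 * (∑ i, ((Y x y₁ v ω, Y x y₂ v ω).1 i - (Y x y₁ v ω, Y x y₂ v ω).2 i)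
                  * (g x (Y x y₁ v ω, Y x y₂ v ω).1 i - g x (Y x y₁ v ω, Y x y₂ v ω).2 i))
                + ∑ i, ∑ k, (h x (Y x y₁ v ω, Y x y₂ v ω).1 i k
                  - h x (Y x y₁ v ω, Y x y₂ v ω).2 i k) ^ 2) := by
    funext r ω
    congr 1
    apply intervalIntegral.integral_congr
    intro v _
    exact FrozenAux.generator_phiSq m n e g h x (Y x y₁ v ω, Y x y₂ v ω)
  rw [hfun] at h0
  have hmain := FrozenAux.main_aux ℙ F n γ₂ hγ₂
    (fun r ω => (Y x y₁ r ω, Y x y₂ r ω)) (y₁, y₂)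
    (fun p => 2 * (∑ i, (p.1 i - p.2 i) * (g x p.1 i - g x p.2 i))
      + ∑ i, ∑ k, (h x p.1 i k - h x p.2 i k) ^ 2)
    hLc hL hP0 hPcont hPmeas h0 t ht
  exact hmain
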